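/- Let ν be a probability measure on ℝ^d with ∫|y| dν(y) < ∞, let φ : ℝ^d → ℝ₊ be a nonnegative convex function with ∫φ dν < ∞, and let η ≤_cx ν. Then for every M > 0, ∫ φ(x) 1_{φ(x) ≥ M} dη(x) ≤ ∫ φ(y) 1_{φ(y) ≥ √M} dν(y) + (1/√M) ∫ φ(y) dν(y). -/

import Mathlib

open MeasureTheory ProbabilityTheory Set Filter
open scoped ENNReal BoundedContinuousFunction

noncomputable section

abbrev Ed (d : ℕ) := EuclideanSpace ℝ (Fin d)

/-- π is a coupling of μ and ν. -/
def IsCoupling {d : ℕ} (π : Measure (Ed d × Ed d)) (μ ν : Measure (Ed d)) : Prop :=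
  π.map Prod.fst = μ ∧ π.map Prod.snd = ν

/-- quadratic transport cost of a coupling. -/
def cost {d : ℕ} (π : Measure (Ed d × Ed d)) : ℝ := ∫ p, ‖p.2 - p.1‖ ^ 2 ∂π

/-- squared quadratic Wasserstein distance. -/
def W2sq {d : ℕ} (μ ν : Measure (Ed d)) : ℝ := sInf (cost '' {π | IsCoupling π μ ν})

/-- π is a W₂-optimal coupling between μ and ν. -/
def IsOptimalCoupling {d : ℕ} (π : Measure (Ed d × Ed d)) (μ ν : Measure (Ed d)) : Prop :=
  IsCoupling π μ ν ∧ cost π = W2sq μ ν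

/-- the coupling (Id, T)#μ given by a map T. -/
def givenByMap {d : ℕ} (μ : Measure (Ed d)) (T : Ed d → Ed d) : Measure (Ed d × Ed d) :=
  μ.map (fun x => (x, T x))

/-- finite second moment. -/
def FiniteSecondMoment {d : ℕ} (μ : Measure (Ed d)) : Prop :=
  Integrable (fun x => ‖x‖ ^ 2) μ

/-- convex order: ∫φ dη ≤ ∫φ dν for all convex φ whose integrals make sense. -/
def ConvexOrder {d : ℕ} (η ν : Measure (Ed d)) : Prop :=
  ∀ φ : Ed d → ℝ, ConvexOn ℝ Set.univ φ → Integrable φ η → Integrable φ ν →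
    ∫ x, φ x ∂η ≤ ∫ y, φ y ∂ν


/-- Quantitative uniform-integrability bound for nonnegative convex φ and η ≤cx ν. -/
theorem stmt9 {d : ℕ} (ν : Measure (Ed d)) [IsProbabilityMeasure ν]
    (hν1 : Integrable (fun y => ‖y‖) ν)
    (φ : Ed d → ℝ) (hφ : ConvexOn ℝ Set.univ φ) (hφpos : ∀ x, 0 ≤ φ x)
    (hφν : Integrable φ ν)
    (η : Measure (Ed d)) [IsProbabilityMeasure η] (hcx : ConvexOrder η ν)
    (M : ℝ) (hM : 0 < M) :
    ∫ x in {x | M ≤ φ x}, φ x ∂η ≤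
      ∫ y in {y | Real.sqrt M ≤ φ y}, φ y ∂ν + (1 / Real.sqrt M) * ∫ y, φ y ∂ν := by
  have hs : 0 < Real.sqrt M := Real.sqrt_pos.mpr hM
  have hss : Real.sqrt M * Real.sqrt M = M := Real.mul_self_sqrt hM.le
  -- φ is continuous, hence measurable
  have hφcont : Continuous φ := by
    exact continuousOn_univ.mp (hφ.continuousOn isOpen_univ)
  have hφmeas : Measurable φ := hφcont.measurable
  have hsetM : MeasurableSet {x : Ed d | M ≤ φ x} := hφmeas measurableSet_Ici
  have hsets : MeasurableSet {x : Ed d | Real.sqrt M ≤ φ x} := hφmeas measurableSet_Ici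
  -- the auxiliary convex function ψ = (φ - √M)⁺
  set ψ : Ed d → ℝ := fun x => max (φ x - Real.sqrt M) 0 with hψdef
  have hψconv : ConvexOn ℝ Set.univ ψ := by
    refine ConvexOn.sup ?_ (convexOn_const 0 convex_univ)
    exact hφ.sub (concaveOn_const (Real.sqrt M) convex_univ)
  have hψnonneg : ∀ x, 0 ≤ ψ x := fun x => le_max_right _ _
  have hψle : ∀ x, ψ x ≤ φ x := by
    intro x
    simp only [hψdef, max_le_iff]
    constructor
    · linarith [hs]
    · exact hφpos x
  have hψcont : Continuous ψ := (hφcont.sub continuous_const).max continuous_const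
  have hψν : Integrable ψ ν := by
    refine hφν.mono' hψcont.aestronglyMeasurable ?_
    filter_upwards with x
    rw [Real.norm_eq_abs, abs_of_nonneg (hψnonneg x)]
    exact hψle x
  -- ∫ ψ dν ≤ ∫_{√M ≤ φ} φ dν
  have hψν_le : ∫ y, ψ y ∂ν ≤ ∫ y in {y | Real.sqrt M ≤ φ y}, φ y ∂ν := by
    rw [← integral_indicator hsets]
    refine integral_mono hψν (hφν.indicator hsets) ?_
    intro y
    by_cases hy : Real.sqrt M ≤ φ y
    · simp only [Set.indicator_of_mem, hy, Set.mem_setOf_eq]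
      exact hψle y
    · have : φ y - Real.sqrt M ≤ 0 := by linarith [not_le.mp hy]
      simp [Set.indicator_of_notMem, hy, hψdef, max_eq_right this]
  -- RHS is nonnegative
  have hRHS1 : 0 ≤ ∫ y in {y | Real.sqrt M ≤ φ y}, φ y ∂ν :=
    setIntegral_nonneg hsets fun y _ => hφpos y
  have hRHS2 : 0 ≤ ∫ y, φ y ∂ν := integral_nonneg hφpos
  by_cases hInt : IntegrableOn φ {x | M ≤ φ x} η
  · -- φ is integrable w.r.t. η
    have hφη : Integrable φ η := by
      have hcompl : IntegrableOn φ {x : Ed d | M ≤ φ x}ᶜ η := by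
        refine Measure.integrableOn_of_bounded (measure_ne_top _ _)
          hφcont.aestronglyMeasurable (M := M) ?_
        filter_upwards [ae_restrict_mem hsetM.compl] with x hx
        simp only [Set.mem_compl_iff, Set.mem_setOf_eq, not_le] at hx
        rw [Real.norm_eq_abs, abs_of_nonneg (hφpos x)]
        exact hx.le
      have := hInt.union hcompl
      rwa [Set.union_compl_self, integrableOn_univ] at this
    have hψη : Integrable ψ η := by
      refine hφη.mono' hψcont.aestronglyMeasurable ?_
      filter_upwards with x
      rw [Real.norm_eq_abs, abs_of_nonneg (hψnonneg x)]
      exact hψle x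
    -- step 1: ∫_{M ≤ φ} φ dη ≤ ∫ ψ dη + √M * η{M ≤ φ}
    have step1 : ∫ x in {x | M ≤ φ x}, φ x ∂η ≤
        ∫ x, ψ x ∂η + Real.sqrt M * (η {x | M ≤ φ x}).toReal := by
      have h1 : ∫ x in {x | M ≤ φ x}, φ x ∂η ≤
          ∫ x in {x | M ≤ φ x}, (ψ x + Real.sqrt M) ∂η := by
        refine setIntegral_mono_on hInt
          ((hψη.add (integrable_const _)).integrableOn) hsetM ?_
        intro x _
        have : φ x - Real.sqrt M ≤ max (φ x - Real.sqrt M) 0 := le_max_left _ _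
        simp only [hψdef]; linarith
      have h2 : ∫ x in {x | M ≤ φ x}, (ψ x + Real.sqrt M) ∂η =
          ∫ x in {x | M ≤ φ x}, ψ x ∂η + Real.sqrt M * (η {x | M ≤ φ x}).toReal := by
        rw [integral_add hψη.integrableOn (integrable_const _), integral_const]
        simp [Measure.restrict_apply_univ, mul_comm, Measure.real]
      have h3 : ∫ x in {x | M ≤ φ x}, ψ x ∂η ≤ ∫ x, ψ x ∂η :=
        setIntegral_le_integral hψη (Filter.Eventually.of_forall hψnonneg)
      linarith
    -- step 2: ∫ ψ dη ≤ ∫ ψ dν by convex order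
    have step2 : ∫ x, ψ x ∂η ≤ ∫ y, ψ y ∂ν := hcx ψ hψconv hψη hψν
    -- step 3: Markov + convex order on φ
    have hMarkov : M * (η {x | M ≤ φ x}).toReal ≤ ∫ x, φ x ∂η :=
      mul_meas_ge_le_integral_of_nonneg (Filter.Eventually.of_forall hφpos) hφη M
    have hφcx : ∫ x, φ x ∂η ≤ ∫ y, φ y ∂ν := hcx φ hφ hφη hφν
    have step3 : Real.sqrt M * (η {x | M ≤ φ x}).toReal ≤
        (1 / Real.sqrt M) * ∫ y, φ y ∂ν := by
      have hm : M * (η {x | M ≤ φ x}).toReal ≤ ∫ y, φ y ∂ν := hMarkov.trans hφcx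
      rw [div_mul_eq_mul_div, le_div_iff₀ hs, one_mul]
      calc Real.sqrt M * (η {x | M ≤ φ x}).toReal * Real.sqrt M
          = M * (η {x | M ≤ φ x}).toReal := by rw [mul_right_comm, hss]
        _ ≤ ∫ y, φ y ∂ν := hm
    linarith
  · rw [integral_undef hInt]
    positivity
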